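/- For every standard Sturmian sequence u over {0,1} there is a unique standard Sturmian sequence u' such that u = φ_b(u') or u = φ_β(u'), where φ_b: 0→0, 1→01 and φ_β: 0→10, 1→1. -/

import Mathlib

/-- Words over the binary alphabet `{0,1}`, represented as `ZMod 2`. -/
abbrev Word := List (ZMod 2)

/-- `m` is an occurrence of the word `w` in the sequence `s`. -/
def OccAt (s : ℕ → ZMod 2) (w : Word) (m : ℕ) : Prop :=
  w = List.ofFn fun i : Fin w.length => s (m + i)

/-- `w` is a factor of the sequence `s`. -/
def IsFactor (s : ℕ → ZMod 2) (w : Word) : Prop := ∃ m, OccAt s w m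

/-- Factor complexity of a sequence. -/
noncomputable def Cplx (s : ℕ → ZMod 2) (n : ℕ) : ℕ :=
  {w : Word | w.length = n ∧ IsFactor s w}.ncard

/-- A Sturmian sequence: factor complexity `n + 1` for all `n`. -/
def IsSturmian (s : ℕ → ZMod 2) : Prop := ∀ n, Cplx s n = n + 1

/-- Prepend a letter to an infinite sequence. -/
def consL (a : ZMod 2) (s : ℕ → ZMod 2) : ℕ → ZMod 2 :=
  fun n => match n with
  | 0 => a
  | k + 1 => s k

/-- A standard Sturmian sequence: both `0u` and `1u` are Sturmian. -/
def IsStandardSturmian (s : ℕ → ZMod 2) : Prop :=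
  IsSturmian (consL 0 s) ∧ IsSturmian (consL 1 s)

/-- The sequence `t` is the image of the sequence `s` under the substitution `φ`:
every prefix of `t` is a prefix of the `φ`-image of some prefix of `s`. -/
def SubstImage (φ : ZMod 2 → Word) (s t : ℕ → ZMod 2) : Prop :=
  ∀ n, ∃ k, (List.ofFn fun i : Fin n => t i) <+:
              ((List.ofFn fun i : Fin k => s i).flatMap φ)

/-- The morphism `φ_b : 0 → 0, 1 → 01`. -/
def phib (a : ZMod 2) : Word := if a = 0 then [0] else [0, 1]

/-- The morphism `φ_β : 0 → 10, 1 → 1`. -/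
def phibeta (a : ZMod 2) : Word := if a = 0 then [1, 0] else [1]

/-- segment of `s` of length `n` starting at `m` -/
def seg (s : ℕ → ZMod 2) (m n : ℕ) : Word := List.ofFn fun i : Fin n => s (m + i)

@[simp] lemma seg_length (s m n) : (seg s m n).length = n := by simp [seg]

lemma seg_get (s m n) (i : ℕ) (h : i < n) : (seg s m n)[i]'(by simpa using h) = s (m + i) := by
  simp [seg]

@[simp] lemma seg_zero (s m) : seg s m 0 = [] := by simp [seg]

lemma seg_succ (s m n) : seg s m (n+1) = seg s m n ++ [s (m+n)] := by
  rw [seg, List.ofFn_succ']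
  simp [seg, List.concat_eq_append, Fin.castSucc]

lemma seg_add (s m n k) : seg s m (n+k) = seg s m n ++ seg s (m+n) k := by
  induction k with
  | zero => simp
  | succ k ih => rw [seg_succ, ← List.append_assoc, ← ih, ← Nat.add_assoc, seg_succ,
      Nat.add_assoc]

lemma occAt_iff_seg (s w m) : OccAt s w m ↔ w = seg s m w.length := Iff.rfl

def Fct (s : ℕ → ZMod 2) (n : ℕ) : Set Word := Set.range (fun m => seg s m n)

lemma seg_mem_fct (s m n) : seg s m n ∈ Fct s n := ⟨m, rfl⟩

lemma mem_fct {s n w} (m : ℕ) (h : w = seg s m n) : w ∈ Fct s n := h ▸ seg_mem_fct s m n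

lemma fact_eq (s n) : {w : Word | w.length = n ∧ IsFactor s w} = Fct s n := by
  ext w
  constructor
  · rintro ⟨hl, m, hw⟩; exact ⟨m, by rw [occAt_iff_seg] at hw; rw [← hl]; exact hw.symm⟩
  · rintro ⟨m, rfl⟩; exact ⟨by simp, m, by rw [occAt_iff_seg]; simp⟩

lemma cplx_eq (s n) : Cplx s n = (Fct s n).ncard := by rw [Cplx, fact_eq]

lemma fact_finite (s n) : (Fct s n).Finite := by
  have : Fct s n ⊆ {w : Word | w.length = n} := by rintro w ⟨m, rfl⟩; simp
  exact Set.Finite.subset (List.finite_length_eq _ n) this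

lemma fact_nonempty (s n) : (Fct s n).Nonempty := ⟨seg s 0 n, 0, rfl⟩

lemma mem_fact_length {s n w} (h : w ∈ Fct s n) : w.length = n := by
  rcases h with ⟨m, rfl⟩; simp

@[simp] lemma fact_zero (s) : Fct s 0 = {[]} := by
  ext w; simp [Fct]

lemma cplx_zero (s) : Cplx s 0 = 1 := by simp [cplx_eq]

/-- drop-last: factors restrict -/
lemma fact_dropLast {s n w} (h : w ∈ Fct s (n+1)) : w.dropLast ∈ Fct s n := by
  rcases h with ⟨m, rfl⟩
  refine ⟨m, ?_⟩
  dsimp only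
  rw [seg_succ]; simp

lemma fact_append_last {s n w} (h : w ∈ Fct s (n+1)) : ∃ a, w.dropLast ++ [a] = w := by
  rcases h with ⟨m, rfl⟩
  refine ⟨s (m+n), ?_⟩
  show (seg s m (n+1)).dropLast ++ _ = seg s m (n+1)
  conv_rhs => rw [seg_succ]
  rw [seg_succ]; simp

/-- every factor extends to the right -/
lemma fact_extend {s n w} (h : w ∈ Fct s n) : ∃ a, w ++ [a] ∈ Fct s (n+1) := by
  rcases h with ⟨m, rfl⟩
  refine ⟨s (m+n), m, ?_⟩
  dsimp only
  rw [seg_succ]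

/-- drop front: suffix of a factor is a factor -/
lemma fact_drop {s n w} (d : ℕ) (h : w ∈ Fct s n) : w.drop d ∈ Fct s (n - d) := by
  rcases h with ⟨m, rfl⟩
  rcases le_or_gt d n with hd | hd
  · refine ⟨m + d, ?_⟩
    dsimp only
    conv_rhs => rw [show n = d + (n - d) by omega, seg_add]
    simp
  · refine ⟨m + d, ?_⟩
    dsimp only
    rw [show n - d = 0 by omega]
    rw [List.drop_eq_nil_iff.mpr (by simp; omega)]
    simp

lemma zmod2_cases (a : ZMod 2) : a = 0 ∨ a = 1 := by revert a; decide

/-- right special factors -/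
def RS (s : ℕ → ZMod 2) (n : ℕ) : Set Word :=
  {w | w ∈ Fct s n ∧ w ++ [0] ∈ Fct s (n+1) ∧ w ++ [1] ∈ Fct s (n+1)}

lemma rs_subset (s n) : RS s n ⊆ Fct s n := fun _ h => h.1

lemma rs_finite (s n) : (RS s n).Finite := (fact_finite s n).subset (rs_subset s n)

def Dset (s : ℕ → ZMod 2) (n : ℕ) (a : ZMod 2) : Set Word :=
  {w | w ∈ Fct s n ∧ w ++ [a] ∈ Fct s (n+1)}

lemma dset_finite (s n a) : (Dset s n a).Finite := (fact_finite s n).subset (fun _ h => h.1)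

lemma fact_succ_eq (s n) :
    Fct s (n+1) = ((· ++ ([0] : Word)) '' Dset s n 0) ∪ ((· ++ ([1] : Word)) '' Dset s n 1) := by
  ext w
  constructor
  · intro hw
    obtain ⟨a, ha⟩ := fact_append_last hw
    have hd : w.dropLast ∈ Fct s n := fact_dropLast hw
    rcases zmod2_cases a with rfl | rfl
    · exact Or.inl ⟨w.dropLast, ⟨hd, by rwa [ha]⟩, ha⟩
    · exact Or.inr ⟨w.dropLast, ⟨hd, by rwa [ha]⟩, ha⟩
  · rintro (⟨v, hv, rfl⟩ | ⟨v, hv, rfl⟩) <;> exact hv.2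

lemma dset_union (s n) : Fct s n = Dset s n 0 ∪ Dset s n 1 := by
  ext w
  constructor
  · intro hw
    obtain ⟨a, ha⟩ := fact_extend hw
    rcases zmod2_cases a with rfl | rfl
    · exact Or.inl ⟨hw, ha⟩
    · exact Or.inr ⟨hw, ha⟩
  · rintro (h | h) <;> exact h.1

lemma dset_inter (s n) : RS s n = Dset s n 0 ∩ Dset s n 1 := by
  ext w
  exact ⟨fun h => ⟨⟨h.1, h.2.1⟩, ⟨h.1, h.2.2⟩⟩, fun h => ⟨h.1.1, h.1.2, h.2.2⟩⟩

lemma cplx_succ (s n) : Cplx s (n+1) = Cplx s n + (RS s n).ncard := by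
  rw [cplx_eq, cplx_eq, fact_succ_eq, dset_union, dset_inter]
  have hinj : ∀ a : ZMod 2, Function.Injective (· ++ ([a] : Word)) := by
    intro a x y h
    simpa using h
  rw [Set.ncard_union_eq ?disj ((dset_finite s n 0).image _) ((dset_finite s n 1).image _),
    Set.ncard_image_of_injective _ (hinj 0), Set.ncard_image_of_injective _ (hinj 1)]
  case disj =>
    rw [Set.disjoint_left]
    rintro x ⟨v, _, rfl⟩ ⟨v', _, h⟩
    have := congrArg (fun l => l.getLast?) h
    simp at this
  have := Set.ncard_union_add_ncard_inter (Dset s n 0) (Dset s n 1)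
    (dset_finite s n 0) (dset_finite s n 1)
  omega

lemma sturmian_iff (s) : IsSturmian s ↔ ∀ n, (RS s n).ncard = 1 := by
  constructor
  · intro h n
    have := cplx_succ s n
    rw [h n, h (n+1)] at this
    omega
  · intro h
    intro n
    induction n with
    | zero => exact cplx_zero s
    | succ n ih => rw [cplx_succ, ih, h]

lemma rs_drop {s m w} (n : ℕ) (hn : n ≤ m) (h : w ∈ RS s m) : w.drop (m - n) ∈ RS s n := by
  obtain ⟨h1, h2, h3⟩ := h
  have hl : w.length = m := mem_fact_length h1
  have key : ∀ a : ZMod 2, w ++ [a] ∈ Fct s (m+1) → w.drop (m-n) ++ [a] ∈ Fct s (n+1) := by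
    intro a ha
    have := fact_drop (m - n) ha
    rwa [List.drop_append_of_le_length (by omega), show m + 1 - (m - n) = n + 1 by omega] at this
  exact ⟨by simpa [show m - (m-n) = n by omega] using fact_drop (m-n) h1, key 0 h2, key 1 h3⟩

lemma cplx_const_of_rs_empty {s n} (h : RS s n = ∅) : ∀ m, n ≤ m → Cplx s m = Cplx s n := by
  intro m hm
  induction m with
  | zero => have : n = 0 := by omega
            rw [this]
  | succ m ih =>
    rcases Nat.lt_or_ge n (m+1) with hlt | hge
    · have hnm : n ≤ m := by omega
      have hempty : RS s m = ∅ := by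
        by_contra hne
        obtain ⟨w, hw⟩ := Set.nonempty_iff_ne_empty.mpr hne
        exact absurd (rs_drop n hnm hw) (by simp [h])
      rw [cplx_succ, hempty, ih hnm]
      simp
    · have : n = m + 1 := by omega
      rw [this]

@[simp] lemma consL_zero (a s) : consL a s 0 = a := rfl
@[simp] lemma consL_succ (a s k) : consL a s (k+1) = s k := rfl

lemma seg_consL_shift (a s m n) : seg (consL a s) (m+1) n = seg s m n := by
  apply List.ext_getElem (by simp)
  intro i h1 h2
  rw [seg_get _ _ _ _ (by simpa using h1), seg_get _ _ _ _ (by simpa using h2),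
    show m + 1 + i = (m + i) + 1 by omega, consL_succ]

lemma seg_consL_cons (a s m n) : seg (consL a s) m (n+1) = consL a s m :: seg s m n := by
  apply List.ext_getElem (by simp)
  intro i h1 h2
  match i with
  | 0 => rw [seg_get _ _ _ _ (by simpa using h1)]
         simp
  | j + 1 =>
    rw [seg_get _ _ _ _ (by simpa using h1), List.getElem_cons_succ,
      seg_get _ _ _ _ (by simp at h2; omega), show m + (j+1) = (m+j)+1 by omega, consL_succ]

lemma fct_consL (a s n) : Fct (consL a s) n = insert (seg (consL a s) 0 n) (Fct s n) := by
  ext w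
  constructor
  · rintro ⟨m, rfl⟩
    match m with
    | 0 => exact Or.inl rfl
    | m + 1 => exact Or.inr ⟨m, (seg_consL_shift a s m n).symm⟩
  · rintro (rfl | ⟨m, rfl⟩)
    · exact ⟨0, rfl⟩
    · exact ⟨m + 1, seg_consL_shift a s m n⟩

lemma cplx_consL_le (a s n) : Cplx (consL a s) n ≤ Cplx s n + 1 := by
  rw [cplx_eq, cplx_eq, fct_consL]
  exact le_trans (Set.ncard_insert_le _ _) (by omega)

lemma cplx_le_cplx_consL (a s n) : Cplx s n ≤ Cplx (consL a s) n := by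
  rw [cplx_eq, cplx_eq, fct_consL]
  exact Set.ncard_le_ncard (Set.subset_insert _ _) ((fact_finite _ n).insert _)

/-- a standard Sturmian sequence is Sturmian -/
lemma sturmian_of_standard {u} (hu : IsStandardSturmian u) : IsSturmian u := by
  obtain ⟨h0, _⟩ := hu
  have hub : ∀ n, n ≤ Cplx u n := by
    intro n
    have := cplx_consL_le 0 u n
    rw [h0 n] at this
    omega
  have hle : ∀ n, Cplx u n ≤ n + 1 := by
    intro n
    have := cplx_le_cplx_consL 0 u n
    rw [h0 n] at this
    omega
  have hrs : ∀ n, 1 ≤ (RS u n).ncard := by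
    intro n
    rcases Set.eq_empty_or_nonempty (RS u n) with he | hne
    · exfalso
      have h1 := cplx_const_of_rs_empty he (n+2) (by omega)
      have h2 := hub (n+2)
      have h3 := hle n
      omega
    · exact (Set.ncard_pos (rs_finite u n)).mpr hne
  intro n
  induction n with
  | zero => exact cplx_zero u
  | succ n ih =>
    have h1 := cplx_succ u n
    have h2 := hle (n+1)
    have h3 := hrs n
    omega

/-- for standard `u`, factors of `consL a u` are factors of `u` -/
lemma fct_standard_eq {u} (hu : IsStandardSturmian u) (a : ZMod 2) (n : ℕ) :
    Fct (consL a u) n = Fct u n := by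
  have hs := sturmian_of_standard hu
  have hc : IsSturmian (consL a u) := by
    rcases zmod2_cases a with rfl | rfl
    exacts [hu.1, hu.2]
  refine (Set.eq_of_subset_of_ncard_le ?_ ?_ (fact_finite _ n)).symm
  · intro w hw
    rw [fct_consL]
    exact Set.subset_insert _ _ hw
  · rw [← cplx_eq, ← cplx_eq, hs n, hc n]

/-- for standard `u`, every factor extends to the left -/
lemma fact_extend_left {u} (hu : IsStandardSturmian u) {n w} (h : w ∈ Fct u n) :
    ∃ b, b :: w ∈ Fct u (n+1) := by
  obtain ⟨m, hm⟩ := h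
  refine ⟨consL 0 u m, ?_⟩
  rw [← fct_standard_eq hu 0 (n+1)]
  refine mem_fct m ?_
  rw [seg_consL_cons]
  exact congrArg _ hm.symm

/-- prefixes of a standard word are left special -/
lemma prefix_left_special {u} (hu : IsStandardSturmian u) (a : ZMod 2) (n : ℕ) :
    a :: seg u 0 n ∈ Fct u (n+1) := by
  rw [← fct_standard_eq hu a (n+1)]
  exact mem_fct 0 (by rw [seg_consL_cons]; rfl)

lemma seg_const {s : ℕ → ZMod 2} {c m₀} (hc : ∀ j, m₀ ≤ j → s j = c) {m} (hm : m₀ ≤ m) (n : ℕ) :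
    seg s m n = List.replicate n c := by
  apply List.ext_getElem (by simp)
  intro i h1 h2
  rw [seg_get _ _ _ _ (by simpa using h1), List.getElem_replicate, hc _ (by omega)]

lemma cplx_le_of_eventually_const {s : ℕ → ZMod 2} {c m₀} (hc : ∀ j, m₀ ≤ j → s j = c) (n : ℕ) :
    Cplx s n ≤ m₀ + 1 := by
  rw [cplx_eq]
  have hsub : Fct s n ⊆ ↑((Finset.Iic m₀).image fun j => seg s j n) := by
    rintro w ⟨m, rfl⟩
    rcases le_or_gt m m₀ with hm | hm
    · exact Finset.mem_coe.mpr (Finset.mem_image.mpr ⟨m, by simpa using hm, rfl⟩)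
    · refine Finset.mem_coe.mpr (Finset.mem_image.mpr ⟨m₀, by simp, ?_⟩)
      show seg s m₀ n = seg s m n
      rw [seg_const hc le_rfl, seg_const hc hm.le]
  calc (Fct s n).ncard ≤ _ := Set.ncard_le_ncard hsub (Finset.finite_toSet _)
    _ = _ := Set.ncard_coe_finset _
    _ ≤ m₀ + 1 := le_trans (Finset.card_image_le) (by simp)

/-- a Sturmian word cannot have both 00 and 11 as factors -/
lemma not_both_00_11 {s} (hs : IsSturmian s) (h00 : [0,0] ∈ Fct s 2) :
    [1,1] ∉ Fct s 2 := by
  intro h11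
  -- first, [0,1] and [1,0] are factors
  have h01 : ([0,1] : Word) ∈ Fct s 2 := by
    by_contra hn
    have hstep : ∀ m, s m = 0 → s (m+1) = 0 := by
      intro m hm
      rcases zmod2_cases (s (m+1)) with h | h
      · exact h
      · exact absurd (mem_fct m (by rw [seg_succ, seg_succ]; simp [hm, h])) hn
    obtain ⟨m, hm⟩ := h00
    have hm0 : s m = 0 := by
      have := congrArg (fun w => w[0]?) hm
      simpa [seg, List.getElem?_ofFn] using this
    have hconst : ∀ j, m ≤ j → s j = 0 := by
      intro j hj
      induction j with
      | zero => simpa [Nat.le_zero.mp hj] using hm0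
      | succ j ih =>
        rcases Nat.lt_or_ge m (j+1) with h | h
        · exact hstep j (ih (by omega))
        · have : m = j + 1 := by omega
          rw [← this]; exact hm0
    have := cplx_le_of_eventually_const hconst (m+2)
    rw [hs (m+2)] at this
    omega
  have h10 : ([1,0] : Word) ∈ Fct s 2 := by
    by_contra hn
    have hstep : ∀ m, s m = 1 → s (m+1) = 1 := by
      intro m hm
      rcases zmod2_cases (s (m+1)) with h | h
      · exact absurd (mem_fct m (by rw [seg_succ, seg_succ]; simp [hm, h])) hn
      · exact h
    obtain ⟨m, hm⟩ := h11
    have hm0 : s m = 1 := by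
      have := congrArg (fun w => w[0]?) hm
      simpa [seg, List.getElem?_ofFn] using this
    have hconst : ∀ j, m ≤ j → s j = 1 := by
      intro j hj
      induction j with
      | zero => simpa [Nat.le_zero.mp hj] using hm0
      | succ j ih =>
        rcases Nat.lt_or_ge m (j+1) with h | h
        · exact hstep j (ih (by omega))
        · have : m = j + 1 := by omega
          rw [← this]; exact hm0
    have := cplx_le_of_eventually_const hconst (m+2)
    rw [hs (m+2)] at this
    omega
  have hsub : (↑({[0,0],[0,1],[1,0],[1,1]} : Finset Word) : Set Word) ⊆ Fct s 2 := by
    intro w hw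
    simp only [Finset.coe_insert, Finset.coe_singleton, Set.mem_insert_iff,
      Set.mem_singleton_iff] at hw
    rcases hw with rfl | rfl | rfl | rfl
    exacts [h00, h01, h10, h11]
  have hle := Set.ncard_le_ncard hsub (fact_finite s 2)
  rw [Set.ncard_coe_finset, ← cplx_eq, hs 2] at hle
  have : ({[0,0],[0,1],[1,0],[1,1]} : Finset Word).card = 4 := by decide
  omega

/-! ### φ_b word lemmas -/

lemma phib_cases (a : ZMod 2) : phib a = [0] ∨ phib a = [0, 1] := by revert a; decide

lemma count_phib (a : ZMod 2) : List.count 0 (phib a) = 1 := by revert a; decide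

lemma count_flatMap_phib (w : Word) : List.count 0 (w.flatMap phib) = w.length := by
  induction w with
  | nil => simp
  | cons a w ih => simp [List.flatMap_cons, List.count_append, ih, count_phib a, Nat.add_comm]

lemma flatMap_phib_head (w : Word) (h : w ≠ []) : ∃ r, w.flatMap phib = 0 :: r := by
  rcases w with _ | ⟨a, w'⟩
  · exact absurd rfl h
  · rcases phib_cases a with h1 | h1
    · exact ⟨w'.flatMap phib, by rw [List.flatMap_cons, h1]; rfl⟩
    · exact ⟨1 :: w'.flatMap phib, by rw [List.flatMap_cons, h1]; rfl⟩

@[simp] lemma phib_zero : phib 0 = [0] := by decide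
@[simp] lemma phib_one : phib 1 = [0, 1] := by decide

lemma phib_inj : ∀ w1 w2 : Word, w1.flatMap phib = w2.flatMap phib → w1 = w2 := by
  intro w1
  induction w1 with
  | nil =>
    intro w2 h
    rcases w2 with _ | ⟨b, w2'⟩
    · rfl
    · obtain ⟨r, hr⟩ := flatMap_phib_head (b :: w2') (by simp)
      rw [← h] at hr
      simp at hr
  | cons a w1' ih =>
    intro w2 h
    rcases w2 with _ | ⟨b, w2'⟩
    · obtain ⟨r, hr⟩ := flatMap_phib_head (a :: w1') (by simp)
      rw [h] at hr
      simp at hr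
    · rw [List.flatMap_cons, List.flatMap_cons] at h
      rcases zmod2_cases a with rfl | rfl <;> rcases zmod2_cases b with rfl | rfl <;>
        simp only [phib_zero, phib_one, List.cons_append, List.nil_append,
          List.cons.injEq, true_and] at h
      · rw [ih _ h]
      · exfalso
        rcases w1' with _ | ⟨c, w''⟩
        · simp at h
        · obtain ⟨r, hr⟩ := flatMap_phib_head (c :: w'') (by simp)
          rw [hr] at h
          simp only [List.cons.injEq] at h
          exact absurd h.1 (by decide)
      · exfalso
        rcases w2' with _ | ⟨c, w''⟩
        · simp at h
        · obtain ⟨r, hr⟩ := flatMap_phib_head (c :: w'') (by simp)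
          rw [hr] at h
          simp only [List.cons.injEq] at h
          exact absurd h.1 (by decide)
      · rw [ih _ h]

/-- decoding a common suffix -/
lemma decode_suffix {w1 w2 : Word} (hl : w1.length = w2.length)
    (h : (w1.flatMap phib ++ [0]) <:+ (w2.flatMap phib ++ [0])) : w1 = w2 := by
  obtain ⟨x, hx⟩ := h
  rw [← List.append_assoc] at hx
  have hx' : x ++ w1.flatMap phib = w2.flatMap phib := by
    rwa [List.append_left_inj] at hx
  have hcount : List.count 0 x = 0 := by
    have := congrArg (List.count 0) hx'
    rw [List.count_append, count_flatMap_phib, count_flatMap_phib, hl] at this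
    omega
  rcases x with _ | ⟨c, x'⟩
  · exact phib_inj _ _ (by simpa using hx')
  · exfalso
    have hc : c ≠ 0 := by
      intro h0
      rw [h0] at hcount
      simp at hcount
    have hw2 : w2 ≠ [] := by
      rintro rfl
      simp at hx'
    obtain ⟨r, hr⟩ := flatMap_phib_head w2 hw2
    rw [hr] at hx'
    simp at hx'
    exact hc hx'.1

/-- the right-special factors of a Sturmian word form a suffix chain -/
lemma rs_chain {s} (hs : IsSturmian s) {n1 n2 w1 w2} (h1 : w1 ∈ RS s n1) (h2 : w2 ∈ RS s n2)
    (h : n1 ≤ n2) : w1 <:+ w2 := by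
  have hd := rs_drop n1 h h2
  obtain ⟨a, ha⟩ := Set.ncard_eq_one.mp ((sturmian_iff s).mp hs n1)
  rw [ha] at h1 hd
  rw [Set.mem_singleton_iff.mp h1, ← Set.mem_singleton_iff.mp hd]
  exact List.drop_suffix _ _

/-! ### coding structure -/

/-- `s` is the `φ_b`-image of `t`, with block positions `q`. -/
def Code (t s : ℕ → ZMod 2) (q : ℕ → ℕ) : Prop :=
  q 0 = 0 ∧ ∀ n, q (n+1) = q n + 1 + (t n).val ∧ s (q n) = 0 ∧ (t n ≠ 0 → s (q n + 1) = 1)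

namespace Code

variable {t s : ℕ → ZMod 2} {q : ℕ → ℕ}

lemma q_zero (hc : Code t s q) : q 0 = 0 := hc.1

lemma q_step (hc : Code t s q) (n) : q n + 1 ≤ q (n+1) ∧ q (n+1) ≤ q n + 2 := by
  have h := (hc.2 n).1
  have : (t n).val ≤ 1 := by
    rcases zmod2_cases (t n) with h' | h' <;> rw [h'] <;> decide
  omega

lemma q_mono (hc : Code t s q) {m n : ℕ} (h : m ≤ n) : q m + (n - m) ≤ q n := by
  induction n with
  | zero => simp_all
  | succ n ih =>
    rcases Nat.lt_or_ge m (n+1) with h' | h'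
    · have := ih (by omega)
      have := hc.q_step n
      omega
    · have : m = n + 1 := by omega
      rw [this]
      omega

lemma le_q (hc : Code t s q) (n : ℕ) : n ≤ q n := by
  have := hc.q_mono (Nat.zero_le n)
  have := hc.q_zero
  omega

/-- a single block -/
lemma block (hc : Code t s q) (m : ℕ) : seg s (q m) (q (m+1) - q m) = phib (t m) := by
  obtain ⟨hq, h0, h1⟩ := hc.2 m
  rcases zmod2_cases (t m) with h | h
  · have hv : (t m).val = 0 := by rw [h]; rfl
    have hlen : q (m+1) - q m = 1 := by omega
    rw [hlen, h, phib_zero, show (1:ℕ) = 0 + 1 from rfl, seg_succ, seg_zero]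
    simp [h0]
  · have hv : (t m).val = 1 := by rw [h]; rfl
    have hlen : q (m+1) - q m = 2 := by omega
    rw [hlen, h, phib_one]
    have h1' := h1 (by rw [h]; decide)
    simp [seg, List.ofFn_succ, h0, h1']

/-- blocks concatenate -/
lemma blocks (hc : Code t s q) (j n : ℕ) :
    seg s (q j) (q (j+n) - q j) = (seg t j n).flatMap phib := by
  induction n with
  | zero => simp
  | succ n ih =>
    have hle1 : q j ≤ q (j+n) := by have := hc.q_mono (show j ≤ j + n by omega); omega
    have hle2 : q (j+n) ≤ q (j+n+1) := by have := hc.q_step (j+n); omega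
    rw [show j + (n+1) = (j + n) + 1 by omega, seg_succ, List.flatMap_append, ← ih,
      List.flatMap_cons, List.flatMap_nil, List.append_nil, ← hc.block (j+n)]
    rw [show q (j+n+1) - q j = (q (j+n) - q j) + (q (j+n+1) - q (j+n)) by omega, seg_add,
      show q j + (q (j+n) - q j) = q (j+n) by omega]

lemma length_blocks (hc : Code t s q) (j n : ℕ) :
    ((seg t j n).flatMap phib).length = q (j+n) - q j := by
  rw [← hc.blocks j n, seg_length]

lemma find_block (hc : Code t s q) (i : ℕ) : ∃ j, q j ≤ i ∧ i < q (j+1) := by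
  induction i with
  | zero =>
    refine ⟨0, by rw [hc.q_zero], ?_⟩
    have := hc.q_step 0
    rw [hc.q_zero] at this
    omega
  | succ i ih =>
    obtain ⟨j, hj1, hj2⟩ := ih
    rcases Nat.lt_or_ge (i+1) (q (j+1)) with h | h
    · exact ⟨j, by omega, h⟩
    · refine ⟨j+1, by omega, ?_⟩
      have := hc.q_step (j+1)
      omega

end Code

lemma seg_take (s : ℕ → ZMod 2) (m : ℕ) {M K : ℕ} (h : M ≤ K) :
    (seg s m K).take M = seg s m M := by
  rw [show K = M + (K - M) by omega, seg_add]
  rw [List.take_append_of_le_length (by simp)]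
  simp [List.take_of_length_le]

lemma seg_drop (s : ℕ → ZMod 2) (m d K : ℕ) :
    (seg s m K).drop d = seg s (m+d) (K-d) := by
  rcases le_or_gt d K with h | h
  · rw [show K = d + (K - d) by omega, seg_add, List.drop_append_of_le_length (by simp)]
    simp [show d + (K - d) - d = K - d by omega]
  · rw [List.drop_eq_nil_iff.mpr (by simp; omega), show K - d = 0 by omega, seg_zero]

/-- every factor of the image is determined by a factor of the preimage and an offset ≤ 1 -/
lemma code_cplx_le {t s q} (hc : Code t s q) (M : ℕ) :
    Cplx s M ≤ 2 * Cplx t (M+1) := by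
  classical
  rw [cplx_eq, cplx_eq]
  set g : ℕ → Word → Word := fun d v => ((v.flatMap phib).drop d).take M with hg
  have hsub : Fct s M ⊆ (g 0 '' Fct t (M+1)) ∪ (g 1 '' Fct t (M+1)) := by
    rintro w ⟨i, hi⟩
    obtain ⟨j, hj1, hj2⟩ := hc.find_block i
    have hstep := hc.q_step j
    set d := i - q j with hd
    have hd1 : d ≤ 1 := by omega
    have hK : d + M ≤ q (j + (M+1)) - q j := by
      have := hc.q_mono (show j ≤ j + (M+1) by omega)
      omega
    have hw : w = g d (seg t j (M+1)) := by
      rw [hg]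
      dsimp only
      rw [← hc.blocks j (M+1), seg_drop, seg_take s _ (by omega), ← hi]
      dsimp only
      rw [show q j + d = i by omega]
    rcases Nat.le_one_iff_eq_zero_or_eq_one.mp hd1 with h | h
    · rw [h] at hw
      exact Or.inl ⟨seg t j (M+1), seg_mem_fct t j (M+1), hw.symm⟩
    · rw [h] at hw
      exact Or.inr ⟨seg t j (M+1), seg_mem_fct t j (M+1), hw.symm⟩
  calc (Fct s M).ncard ≤ _ := Set.ncard_le_ncard hsub (Set.Finite.union
        ((fact_finite t (M+1)).image _) ((fact_finite t (M+1)).image _))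
    _ ≤ (g 0 '' Fct t (M+1)).ncard + (g 1 '' Fct t (M+1)).ncard := Set.ncard_union_le _ _
    _ ≤ _ := by
        have h1 := Set.ncard_image_le (s := Fct t (M+1)) (f := g 0) (fact_finite t (M+1))
        have h2 := Set.ncard_image_le (s := Fct t (M+1)) (f := g 1) (fact_finite t (M+1))
        omega

/-- transfer of right special factors along a coding -/
lemma rs_transfer {t s q} (hc : Code t s q) {n w} (hw : w ∈ RS t n) :
    (w.flatMap phib) ++ [0] ∈ RS s ((w.flatMap phib).length + 1) := by
  obtain ⟨hwf, hw0, hw1⟩ := hw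
  have hlen : w.length = n := mem_fact_length hwf
  set L := (w.flatMap phib).length with hL
  obtain ⟨j0, hj0⟩ := hw0
  obtain ⟨j1, hj1⟩ := hw1
  have hj0' : seg t j0 (n+1) = w ++ [0] := by exact hj0
  have hj1' : seg t j1 (n+1) = w ++ [1] := by exact hj1
  -- block images
  have hb0 : seg s (q j0) (q (j0+(n+1)) - q j0) = w.flatMap phib ++ [0] := by
    rw [hc.blocks j0 (n+1), hj0', List.flatMap_append]
    simp
  have hb1 : seg s (q j1) (q (j1+(n+1)) - q j1) = (w.flatMap phib ++ [0]) ++ [1] := by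
    rw [hc.blocks j1 (n+1), hj1', List.flatMap_append]
    simp
  have hq0 : q (j0+(n+1)) - q j0 = L + 1 := by
    have h' := congrArg List.length hb0
    rw [seg_length, List.length_append, List.length_cons, List.length_nil] at h'
    omega
  have hq1 : q (j1+(n+1)) - q j1 = L + 2 := by
    have h' := congrArg List.length hb1
    rw [seg_length, List.length_append, List.length_append, List.length_cons, List.length_nil,
      List.length_cons, List.length_nil] at h'
    omega
  have hmem1 : w.flatMap phib ++ [0] ∈ Fct s (L+1) := by
    refine mem_fct (q j0) ?_
    rw [← hq0, hb0]
  have hmem2 : (w.flatMap phib ++ [0]) ++ [0] ∈ Fct s (L+2) := by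
    refine mem_fct (q j0) ?_
    have hle : q j0 ≤ q (j0+(n+1)) := by
      have := hc.q_mono (show j0 ≤ j0 + (n+1) by omega)
      omega
    rw [show L + 2 = (L+1) + 1 by rfl, seg_succ, ← hq0, hb0]
    congr 1
    rw [show q j0 + (q (j0+(n+1)) - q j0) = q (j0+(n+1)) by omega]
    exact congrArg (fun x => [x]) (hc.2 (j0+(n+1))).2.1.symm
  have hmem3 : (w.flatMap phib ++ [0]) ++ [1] ∈ Fct s (L+2) := by
    refine mem_fct (q j1) ?_
    rw [← hq1, hb1]
  exact ⟨hmem1, hmem2, hmem3⟩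

/-- key lemma: the `φ_b`-preimage of a Sturmian sequence is Sturmian -/
lemma code_sturmian {t s q} (hc : Code t s q) (hs : IsSturmian s) : IsSturmian t := by
  rw [sturmian_iff]
  intro n
  have huniq : ∀ w1 ∈ RS t n, ∀ w2 ∈ RS t n, w1 = w2 := by
    intro w1 h1 w2 h2
    have hl : w1.length = w2.length := by
      rw [mem_fact_length h1.1, mem_fact_length h2.1]
    have hz1 := rs_transfer hc h1
    have hz2 := rs_transfer hc h2
    rcases le_total ((w1.flatMap phib).length + 1) ((w2.flatMap phib).length + 1) with h | h
    · exact decode_suffix hl (rs_chain hs hz1 hz2 h)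
    · exact (decode_suffix hl.symm (rs_chain hs hz2 hz1 h)).symm
  have hne : (RS t n).Nonempty := by
    by_contra hemp
    rw [Set.not_nonempty_iff_eq_empty] at hemp
    set C := Cplx t n with hC
    set M := 2 * C + n + 2 with hM
    have h1 := cplx_const_of_rs_empty hemp (M+1) (by omega)
    have h2 := code_cplx_le hc M
    rw [hs M, h1] at h2
    omega
  obtain ⟨w, hw⟩ := hne
  have : RS t n = {w} := by
    ext z
    simp only [Set.mem_singleton_iff]
    exact ⟨fun hz => huniq z hz w hw, fun hz => hz ▸ hw⟩
  rw [this, Set.ncard_singleton]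

/-- a coding gives a substitution image -/
lemma code_substImage {t s q} (hc : Code t s q) : SubstImage phib t s := by
  intro n
  refine ⟨n, ?_⟩
  have h1 : (List.ofFn fun i : Fin n => s i) = seg s 0 n := by
    simp [seg]
  have h2 : (List.ofFn fun i : Fin n => t i) = seg t 0 n := by
    simp [seg]
  rw [h1, h2]
  have hb := hc.blocks 0 n
  rw [hc.q_zero] at hb
  simp only [Nat.zero_add, Nat.sub_zero] at hb
  rw [← hb]
  have hn : n ≤ q n := hc.le_q n
  rw [show q n = n + (q n - n) by omega, seg_add]
  exact ⟨_, rfl⟩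

lemma seg_one (s : ℕ → ZMod 2) (m : ℕ) : seg s m 1 = [s m] := by
  simp [seg]

lemma seg_two (s : ℕ → ZMod 2) (m : ℕ) : seg s m 2 = [s m, s (m+1)] := by
  simp [seg, List.ofFn_succ]

/-! ### construction of the desubstituted word -/

def pfun (u : ℕ → ZMod 2) : ℕ → ℕ :=
  fun n => Nat.rec 0 (fun _ pk => pk + 1 + (u (pk + 1)).val) n

def du (u : ℕ → ZMod 2) : ℕ → ZMod 2 := fun n => u (pfun u n + 1)

@[simp] lemma pfun_zero (u) : pfun u 0 = 0 := rfl
lemma pfun_succ (u n) : pfun u (n+1) = pfun u n + 1 + (u (pfun u n + 1)).val := rfl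

lemma seg_head2 {u : ℕ → ZMod 2} {m k : ℕ} {a b : ZMod 2} {r : Word}
    (h : seg u m (k+2) = a :: b :: r) : u m = a ∧ u (m+1) = b := by
  have h0 := congrArg (fun l : Word => l[0]?) h
  have h1 := congrArg (fun l : Word => l[1]?) h
  simp [seg, List.getElem?_ofFn] at h0 h1
  exact ⟨h0, h1⟩

/-- no 11 in a standard word starting with 0 -/
lemma no_11 {u : ℕ → ZMod 2} (hu : IsStandardSturmian u) (h0 : u 0 = 0) :
    ∀ m, u m = 1 → u (m+1) = 0 := by
  have h00 : ([0,0] : Word) ∈ Fct (consL 0 u) 2 := by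
    refine mem_fct 0 ?_
    rw [seg_two]
    simp [h0]
  have h11 := not_both_00_11 hu.1 h00
  rw [fct_standard_eq hu 0 2] at h11
  intro m hm
  rcases zmod2_cases (u (m+1)) with h | h
  · exact h
  · exfalso
    refine h11 (mem_fct m ?_)
    rw [seg_two, hm, h]

lemma pfun_val_zero {u : ℕ → ZMod 2} (h0 : u 0 = 0) (h11 : ∀ m, u m = 1 → u (m+1) = 0) :
    ∀ n, u (pfun u n) = 0 := by
  intro n
  induction n with
  | zero => simpa using h0
  | succ n ih =>
    rw [pfun_succ]
    rcases zmod2_cases (u (pfun u n + 1)) with h | h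
    · rw [h]
      simpa using h
    · rw [h]
      have := h11 _ h
      simpa [show pfun u n + 1 + (1:ZMod 2).val = pfun u n + 1 + 1 from rfl] using this

lemma code0 {u : ℕ → ZMod 2} (h0 : u 0 = 0) (h11 : ∀ m, u m = 1 → u (m+1) = 0) :
    Code (du u) u (pfun u) := by
  refine ⟨rfl, fun n => ⟨pfun_succ u n, pfun_val_zero h0 h11 n, ?_⟩⟩
  intro h
  rcases zmod2_cases (du u n) with h' | h'
  · exact absurd h' h
  · exact h'

def q1fun (u : ℕ → ZMod 2) : ℕ → ℕ := fun n =>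
  match n with
  | 0 => 0
  | k + 1 => pfun u k + 1

lemma code1 {u : ℕ → ZMod 2} (h0 : u 0 = 0) (h11 : ∀ m, u m = 1 → u (m+1) = 0) :
    Code (consL 0 (du u)) (consL 0 u) (q1fun u) := by
  refine ⟨rfl, fun n => ?_⟩
  match n with
  | 0 =>
    refine ⟨?_, rfl, fun h => absurd rfl h⟩
    show pfun u 0 + 1 = 0 + 1 + (0 : ZMod 2).val
    rfl
  | k + 1 =>
    refine ⟨?_, ?_, ?_⟩
    · show pfun u (k+1) + 1 = pfun u k + 1 + 1 + (du u k).val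
      rw [pfun_succ]
      simp only [du]
      omega
    · show (consL 0 u) (pfun u k + 1) = 0
      rw [consL_succ]
      exact pfun_val_zero h0 h11 k
    · intro h
      show (consL 0 u) (pfun u k + 1 + 1) = 1
      rw [show pfun u k + 1 + 1 = (pfun u k + 1) + 1 from rfl, consL_succ]
      rcases zmod2_cases (du u k) with h' | h'
      · exact absurd h' h
      · exact h'

def q2fun (u : ℕ → ZMod 2) : ℕ → ℕ := fun n =>
  match n with
  | 0 => 0
  | k + 1 => pfun u k + 2

lemma code2 {u : ℕ → ZMod 2} (h0 : u 0 = 0) (h11 : ∀ m, u m = 1 → u (m+1) = 0) :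
    Code (consL 1 (du u)) (consL 0 (consL 1 u)) (q2fun u) := by
  refine ⟨rfl, fun n => ?_⟩
  match n with
  | 0 =>
    refine ⟨?_, rfl, fun _ => rfl⟩
    show pfun u 0 + 2 = 0 + 1 + (1 : ZMod 2).val
    rfl
  | k + 1 =>
    refine ⟨?_, ?_, ?_⟩
    · show pfun u (k+1) + 2 = pfun u k + 2 + 1 + (du u k).val
      rw [pfun_succ]
      simp only [du]
      omega
    · show (consL 0 (consL 1 u)) (pfun u k + 2) = 0
      rw [show pfun u k + 2 = (pfun u k + 1) + 1 from rfl, consL_succ, consL_succ]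
      exact pfun_val_zero h0 h11 k
    · intro h
      show (consL 0 (consL 1 u)) (pfun u k + 2 + 1) = 1
      rw [show pfun u k + 2 + 1 = ((pfun u k + 1) + 1) + 1 from rfl, consL_succ, consL_succ]
      rcases zmod2_cases (du u k) with h' | h'
      · exact absurd h' h
      · exact h'

/-- `01u` has the same factors as `1u` when `u` is standard starting with `0` -/
lemma fct_01u {u : ℕ → ZMod 2} (hu : IsStandardSturmian u) (h0 : u 0 = 0) (n : ℕ) :
    Fct (consL 0 (consL 1 u)) n = Fct (consL 1 u) n := by
  ext w
  constructor
  · rintro ⟨m, hm⟩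
    rw [← hm]
    show seg (consL 0 (consL 1 u)) m n ∈ Fct (consL 1 u) n
    match m with
    | m + 1 =>
      exact mem_fct m (seg_consL_shift 0 (consL 1 u) m n)
    | 0 =>
      match n with
      | 0 => exact mem_fct 0 (by simp)
      | 1 =>
        rw [seg_one, consL_zero, fct_standard_eq hu 1 1]
        exact mem_fct 0 (by rw [seg_one, h0])
      | k + 2 =>
        have hseg : seg (consL 0 (consL 1 u)) 0 (k+2) = 0 :: 1 :: seg u 0 k := by
          rw [show (k+2) = (k+1) + 1 from rfl, seg_consL_cons, seg_consL_cons]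
          simp
        rw [hseg]
        have hp : (1 : ZMod 2) :: seg u 0 k ∈ Fct u (k+1) := prefix_left_special hu 1 k
        obtain ⟨b, hb⟩ := fact_extend_left hu hp
        have hb0 : b = 0 := by
          rcases zmod2_cases b with h | h
          · exact h
          · exfalso
            obtain ⟨m', hm'⟩ := hb
            have h2 := seg_head2 (show seg u m' (k+2) = b :: 1 :: seg u 0 k from hm')
            have h1 := no_11 hu h0 m' (by rw [h2.1, h])
            rw [h2.2] at h1
            exact absurd h1 (by decide)
        rw [hb0] at hb
        rwa [← fct_standard_eq hu 1 (k+2)] at hb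
  · rintro ⟨m, hm⟩
    rw [← hm]
    exact mem_fct (m+1) (seg_consL_shift 0 (consL 1 u) m n).symm

lemma sturmian_01u {u : ℕ → ZMod 2} (hu : IsStandardSturmian u) (h0 : u 0 = 0) :
    IsSturmian (consL 0 (consL 1 u)) := by
  intro n
  rw [cplx_eq, fct_01u hu h0 n, ← cplx_eq]
  exact hu.2 n

/-- existence, for standard words starting with 0 -/
lemma main0 {u : ℕ → ZMod 2} (hu : IsStandardSturmian u) (h0 : u 0 = 0) :
    IsStandardSturmian (du u) ∧ SubstImage phib (du u) u := by
  have h11 := no_11 hu h0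
  refine ⟨⟨code_sturmian (code1 h0 h11) hu.1, code_sturmian (code2 h0 h11) (sturmian_01u hu h0)⟩,
    code_substImage (code0 h0 h11)⟩

/-! ### uniqueness -/

def Wv (v : ℕ → ZMod 2) (k : ℕ) : Word := (seg v 0 k).flatMap phib

lemma ofFn_eq_seg (v : ℕ → ZMod 2) (n : ℕ) :
    (List.ofFn fun i : Fin n => v i) = seg v 0 n := by simp [seg]

@[simp] lemma Wv_zero (v) : Wv v 0 = [] := by simp [Wv]

lemma Wv_succ (v k) : Wv v (k+1) = Wv v k ++ phib (v k) := by
  rw [Wv, seg_succ, List.flatMap_append]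
  simp [Wv]

lemma Wv_mono (v) {k k' : ℕ} (h : k ≤ k') : Wv v k <+: Wv v k' := by
  induction k' with
  | zero => rw [Nat.le_zero.mp h]
  | succ k' ih =>
    rcases Nat.lt_or_ge k (k'+1) with h' | h'
    · refine (ih (by omega)).trans ?_
      rw [Wv_succ]
      exact ⟨_, rfl⟩
    · rw [show k = k' + 1 by omega]

lemma le_Wv_length (v k) : k ≤ (Wv v k).length := by
  have h := count_flatMap_phib (seg v 0 k)
  rw [show (seg v 0 k).flatMap phib = Wv v k from rfl, seg_length] at h
  calc k = List.count 0 (Wv v k) := h.symm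
    _ ≤ _ := List.count_le_length

lemma Wv_length_succ (v k) : (Wv v (k+1)).length = (Wv v k).length + (phib (v k)).length := by
  rw [Wv_succ, List.length_append]

lemma phib_length_pos (a : ZMod 2) : 0 < (phib a).length := by
  rcases phib_cases a with h | h <;> simp [h]

/-- the `φ_b`-image of `v` is an initial segment of `u` -/
lemma subst_prefix {v u : ℕ → ZMod 2} (h : SubstImage phib v u) (k : ℕ) :
    seg u 0 ((Wv v k).length) = Wv v k := by
  set n := (Wv v k).length with hn
  obtain ⟨k', hk'⟩ := h n
  rw [ofFn_eq_seg, ofFn_eq_seg] at hk'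
  have hk'' : seg u 0 n <+: Wv v k' := hk'
  rcases le_total k k' with hle | hle
  · have h2 : Wv v k <+: Wv v k' := Wv_mono v hle
    have h3 : seg u 0 n <+: Wv v k :=
      List.prefix_of_prefix_length_le hk'' h2 (by rw [seg_length])
    exact h3.eq_of_length (by simp [hn])
  · have h2 : Wv v k' <+: Wv v k := Wv_mono v hle
    exact (hk''.trans h2).eq_of_length (by simp [hn])

lemma seg_getElem? {s : ℕ → ZMod 2} {m n i : ℕ} (h : i < n) :
    (seg s m n)[i]? = some (s (m + i)) := by
  simp [seg, List.getElem?_ofFn, h]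

lemma subst_at_block (h : SubstImage phib v u) (k : ℕ) : u ((Wv v k).length) = 0 := by
  have hpre := subst_prefix h (k+1)
  have hlen := Wv_length_succ v k
  have hpos := phib_length_pos (v k)
  have hlt : (Wv v k).length < (Wv v (k+1)).length := by omega
  have h1 := congrArg (fun l : Word => l[(Wv v k).length]?) hpre
  rw [seg_getElem? hlt] at h1
  rw [Wv_succ] at h1
  simp only [Nat.zero_add] at h1
  rw [List.getElem?_append_right (le_refl _), Nat.sub_self] at h1
  have h2 : (phib (v k))[0]? = some 0 := by
    rcases phib_cases (v k) with h' | h' <;> rw [h'] <;> rfl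
  rw [h2] at h1
  simpa using h1

lemma subst_decode (h : SubstImage phib v u) (k : ℕ) : v k = u ((Wv v k).length + 1) := by
  rcases zmod2_cases (v k) with hv | hv
  · have h1 := subst_at_block h (k+1)
    rw [Wv_length_succ, hv, phib_zero] at h1
    simp only [List.length_cons, List.length_nil] at h1
    rw [hv, h1]
  · have hpre := subst_prefix h (k+1)
    have hlen := Wv_length_succ v k
    rw [hv, phib_one] at hlen
    simp only [List.length_cons, List.length_nil] at hlen
    have hlt : (Wv v k).length + 1 < (Wv v (k+1)).length := by omega
    have h1 := congrArg (fun l : Word => l[(Wv v k).length + 1]?) hpre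
    rw [seg_getElem? hlt] at h1
    rw [Wv_succ, hv, phib_one] at h1
    simp only [Nat.zero_add] at h1
    rw [List.getElem?_append_right (by omega),
      show (Wv v k).length + 1 - (Wv v k).length = 1 by omega] at h1
    rw [hv]
    simpa using h1.symm

lemma substImage_phib_unique {v w u : ℕ → ZMod 2} (hv : SubstImage phib v u)
    (hw : SubstImage phib w u) : v = w := by
  have key : ∀ k, (Wv v k).length = (Wv w k).length ∧ v k = w k := by
    intro k
    induction k with
    | zero =>
      refine ⟨by simp, ?_⟩
      rw [subst_decode hv 0, subst_decode hw 0]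
      simp
    | succ k ih =>
      have hvw : v k = w k := ih.2
      have hlen : (Wv v (k+1)).length = (Wv w (k+1)).length := by
        rw [Wv_length_succ, Wv_length_succ, ih.1, hvw]
      refine ⟨hlen, ?_⟩
      rw [subst_decode hv (k+1), subst_decode hw (k+1), hlen]
  funext n
  exact (key n).2

lemma phibeta_cases (a : ZMod 2) : phibeta a = [1, 0] ∨ phibeta a = [1] := by revert a; decide

lemma flatMap_phibeta_head (w : Word) (h : w ≠ []) : ∃ r, w.flatMap phibeta = 1 :: r := by
  rcases w with _ | ⟨a, w'⟩
  · exact absurd rfl h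
  · rcases phibeta_cases a with h1 | h1
    · exact ⟨0 :: w'.flatMap phibeta, by rw [List.flatMap_cons, h1]; rfl⟩
    · exact ⟨w'.flatMap phibeta, by rw [List.flatMap_cons, h1]; rfl⟩

lemma subst_head_phib {v u : ℕ → ZMod 2} (h : SubstImage phib v u) : u 0 = 0 := by
  obtain ⟨k, hk⟩ := h 1
  obtain ⟨tl, htl⟩ := hk
  rcases k with _ | k
  · simp at htl
  · obtain ⟨r, hr⟩ := flatMap_phib_head (List.ofFn fun i : Fin (k+1) => v i) (by simp)
    rw [hr] at htl
    simp only [List.ofFn_succ] at htl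
    have := congrArg (fun l : Word => l[0]?) htl
    simpa using this

lemma subst_head_phibeta {v u : ℕ → ZMod 2} (h : SubstImage phibeta v u) : u 0 = 1 := by
  obtain ⟨k, hk⟩ := h 1
  obtain ⟨tl, htl⟩ := hk
  rcases k with _ | k
  · simp at htl
  · obtain ⟨r, hr⟩ := flatMap_phibeta_head (List.ofFn fun i : Fin (k+1) => v i) (by simp)
    rw [hr] at htl
    simp only [List.ofFn_succ] at htl
    have := congrArg (fun l : Word => l[0]?) htl
    simpa using this

/-! ### the flip symmetry -/

def flipS (s : ℕ → ZMod 2) : ℕ → ZMod 2 := fun n => s n + 1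

lemma flipS_flipS (s : ℕ → ZMod 2) : flipS (flipS s) = s := by
  funext n
  have : ∀ a : ZMod 2, a + 1 + 1 = a := by decide
  exact this _

lemma E_inj : Function.Injective (fun a : ZMod 2 => a + 1) := by
  intro a b h
  have : ∀ a b : ZMod 2, a + 1 = b + 1 → a = b := by decide
  exact this a b h

lemma seg_flip (s m n) : seg (flipS s) m n = (seg s m n).map (· + 1) := by
  apply List.ext_getElem (by simp)
  intro i h1 h2
  rw [seg_get _ _ _ _ (by simpa using h1), List.getElem_map]
  rw [seg_get _ _ _ _ (by simpa using h1)]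
  rfl

lemma fct_flip (s n) : Fct (flipS s) n = (List.map (· + (1:ZMod 2))) '' Fct s n := by
  ext w
  constructor
  · rintro ⟨m, hm⟩
    exact ⟨seg s m n, seg_mem_fct s m n, by rw [← seg_flip]; exact hm⟩
  · rintro ⟨z, ⟨m, hm⟩, hz⟩
    refine mem_fct m ?_
    rw [← hz, ← hm]
    exact (seg_flip s m n).symm

lemma cplx_flip (s n) : Cplx (flipS s) n = Cplx s n := by
  rw [cplx_eq, cplx_eq, fct_flip, Set.ncard_image_of_injective _ (List.map_injective_iff.mpr E_inj)]

lemma sturmian_flip {s} (h : IsSturmian s) : IsSturmian (flipS s) := by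
  intro n
  rw [cplx_flip]
  exact h n

lemma consL_flip (a : ZMod 2) (s : ℕ → ZMod 2) :
    flipS (consL a s) = consL (a+1) (flipS s) := by
  funext n
  cases n <;> rfl

lemma standard_flip {u} (hu : IsStandardSturmian u) : IsStandardSturmian (flipS u) := by
  constructor
  · have h : consL 0 (flipS u) = flipS (consL 1 u) := by
      rw [consL_flip, show (1:ZMod 2) + 1 = 0 by decide]
    rw [h]
    exact sturmian_flip hu.2
  · have h : consL 1 (flipS u) = flipS (consL 0 u) := by
      rw [consL_flip, show (0:ZMod 2) + 1 = 1 by decide]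
    rw [h]
    exact sturmian_flip hu.1

lemma mapE_phib : ∀ a : ZMod 2, (phib a).map (· + 1) = phibeta (a + 1) := by decide
lemma mapE_phibeta : ∀ a : ZMod 2, (phibeta a).map (· + 1) = phib (a + 1) := by decide

lemma mapE_flatMap_phib (w : Word) :
    (w.flatMap phib).map (· + (1:ZMod 2)) = (w.map (· + 1)).flatMap phibeta := by
  induction w with
  | nil => rfl
  | cons a w ih => rw [List.flatMap_cons, List.map_append, ih, List.map_cons,
      List.flatMap_cons, mapE_phib]

lemma mapE_flatMap_phibeta (w : Word) :
    (w.flatMap phibeta).map (· + (1:ZMod 2)) = (w.map (· + 1)).flatMap phib := by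
  induction w with
  | nil => rfl
  | cons a w ih => rw [List.flatMap_cons, List.map_append, ih, List.map_cons,
      List.flatMap_cons, mapE_phibeta]

lemma subst_flip_b {v u : ℕ → ZMod 2} (h : SubstImage phib v u) :
    SubstImage phibeta (flipS v) (flipS u) := by
  intro n
  obtain ⟨k, hk⟩ := h n
  refine ⟨k, ?_⟩
  have h2 := hk.map (· + (1:ZMod 2))
  rw [List.map_ofFn, mapE_flatMap_phib, List.map_ofFn] at h2
  exact h2

lemma subst_flip_beta {v u : ℕ → ZMod 2} (h : SubstImage phibeta v u) :
    SubstImage phib (flipS v) (flipS u) := by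
  intro n
  obtain ⟨k, hk⟩ := h n
  refine ⟨k, ?_⟩
  have h2 := hk.map (· + (1:ZMod 2))
  rw [List.map_ofFn, mapE_flatMap_phibeta, List.map_ofFn] at h2
  exact h2

/-- for every standard Sturmian sequence `u` there is a unique standard
Sturmian sequence `u'` with `u = φ_b(u')` or `u = φ_β(u')`. -/
theorem standard_desubstitution (u : ℕ → ZMod 2) (hu : IsStandardSturmian u) :
    ∃! u' : ℕ → ZMod 2, IsStandardSturmian u' ∧
      (SubstImage phib u' u ∨ SubstImage phibeta u' u) := by
  rcases zmod2_cases (u 0) with h0 | h0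
  · obtain ⟨hstd, hsub⟩ := main0 hu h0
    refine ⟨du u, ⟨hstd, Or.inl hsub⟩, ?_⟩
    rintro y ⟨hy, hyor | hyor⟩
    · exact substImage_phib_unique hyor hsub
    · exact absurd (subst_head_phibeta hyor) (by rw [h0]; decide)
  · have hflip := standard_flip hu
    have h0' : (flipS u) 0 = 0 := by
      show u 0 + 1 = 0
      rw [h0]
      decide
    obtain ⟨hstd, hsub⟩ := main0 hflip h0'
    have hsub' : SubstImage phibeta (flipS (du (flipS u))) u := by
      have := subst_flip_b hsub
      rwa [flipS_flipS] at this
    refine ⟨flipS (du (flipS u)), ⟨standard_flip hstd, Or.inr hsub'⟩, ?_⟩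
    rintro y ⟨hy, hyor | hyor⟩
    · exact absurd (subst_head_phib hyor) (by rw [h0]; decide)
    · have h1 : SubstImage phib (flipS y) (flipS u) := subst_flip_beta hyor
      have h2 : flipS y = du (flipS u) := substImage_phib_unique h1 hsub
      have := congrArg flipS h2
      rwa [flipS_flipS] at this
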